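/- For every real b that is not an integer and with 2b not an integer, lim_{n→∞} ( ∑_{j=1}^{n} 1/(j+b) − H(n) ) = −1/(2b) + (π/2)·cot(πb) − π·∫₀¹ (sin(2πbu)/sin(2πb) − u)·cot(πu) du. -/

import Mathlib

open Real Filter intervalIntegral

open Topology MeasureTheory

/-- antiderivative-based: ∫₀¹ cos(c u) du = sin c / c -/
lemma intCos (c : ℝ) (hc : c ≠ 0) : ∫ u in (0:ℝ)..1, Real.cos (c*u) = Real.sin c / c := by
  have key : ∀ u : ℝ, HasDerivAt (fun v : ℝ => Real.sin (c*v) / c) (Real.cos (c*u)) u := by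
    intro u
    have h1 : HasDerivAt (fun v : ℝ => c*v) c u := by
      simpa using (hasDerivAt_id u).const_mul c
    have := (h1.sin).div_const c
    simpa [mul_comm, mul_div_assoc, mul_div_cancel_left₀ _ hc] using this
  have := intervalIntegral.integral_eq_sub_of_hasDerivAt (fun u _ => key u)
    ((Real.continuous_cos.comp (continuous_const.mul continuous_id)).intervalIntegrable 0 1)
  simpa using this

lemma intUCos (c : ℝ) (hc : c ≠ 0) :
    ∫ u in (0:ℝ)..1, u * Real.cos (c*u) = (Real.cos c - 1)/c^2 + Real.sin c / c := by
  have key : ∀ u : ℝ, HasDerivAt (fun v : ℝ => (Real.cos (c*v) + c*v*Real.sin (c*v)) / c^2)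
      (u * Real.cos (c*u)) u := by
    intro u
    have h1 : HasDerivAt (fun v : ℝ => c*v) c u := by
      simpa using (hasDerivAt_id u).const_mul c
    have h2 := (h1.cos.add (h1.mul h1.sin)).div_const (c^2)
    have e : (-Real.sin (c*u) * c + (c * Real.sin (c*u) + c*u*(Real.cos (c*u)*c)))/c^2
        = u * Real.cos (c*u) := by field_simp; ring
    rw [e] at h2; exact h2
  have cont : Continuous fun u : ℝ => u * Real.cos (c*u) := by
    exact continuous_id.mul (Real.continuous_cos.comp (continuous_const.mul continuous_id))
  have := intervalIntegral.integral_eq_sub_of_hasDerivAt (fun u _ => key u)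
    (cont.intervalIntegrable 0 1)
  rw [this]; field_simp; simp only [mul_zero, Real.cos_zero, zero_mul, add_zero]; ring

lemma intUSin (c : ℝ) (hc : c ≠ 0) :
    ∫ u in (0:ℝ)..1, u * Real.sin (c*u) = (Real.sin c - c * Real.cos c)/c^2 := by
  have key : ∀ u : ℝ, HasDerivAt (fun v : ℝ => (Real.sin (c*v) - c*v*Real.cos (c*v)) / c^2)
      (u * Real.sin (c*u)) u := by
    intro u
    have h1 : HasDerivAt (fun v : ℝ => c*v) c u := by
      simpa using (hasDerivAt_id u).const_mul c
    have h2 := (h1.sin.sub (h1.mul h1.cos)).div_const (c^2)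
    have e : (Real.cos (c*u) * c - (c * Real.cos (c*u) + c*u*(-Real.sin (c*u)*c)))/c^2
        = u * Real.sin (c*u) := by field_simp; ring
    rw [e] at h2; exact h2
  have cont : Continuous fun u : ℝ => u * Real.sin (c*u) := by
    exact continuous_id.mul (Real.continuous_sin.comp (continuous_const.mul continuous_id))
  have := intervalIntegral.integral_eq_sub_of_hasDerivAt (fun u _ => key u)
    (cont.intervalIntegrable 0 1)
  rw [this]; field_simp; simp

/-- Dirichlet kernel identity -/
lemma dirichlet (n : ℕ) (u : ℝ) :
    Real.sin (π*u) * (1 + 2*∑ j ∈ Finset.range n, Real.cos (2*π*(j+1)*u))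
      = Real.sin ((2*n+1)*π*u) := by
  induction n with
  | zero => simp
  | succ n ih =>
    rw [Finset.sum_range_succ]
    have e1 : ((2*(n+1):ℕ)+1:ℝ)*π*u = π*u + 2*π*(n+1)*u := by push_cast; ring
    have e2 : ((2*n:ℕ)+1:ℝ)*π*u = 2*π*(n+1)*u - π*u := by push_cast; ring
    push_cast at ih ⊢
    rw [show (2*((n:ℝ)+1)+1)*π*u = π*u + 2*π*((n:ℝ)+1)*u by ring, Real.sin_add]
    rw [show (2*(n:ℝ)+1)*π*u = 2*π*((n:ℝ)+1)*u - π*u by ring, Real.sin_sub] at ih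
    nlinarith [ih]

/-- conjugate Dirichlet kernel identity -/
lemma conjDirichlet (n : ℕ) (u : ℝ) :
    Real.cos (π*u) - Real.cos ((2*n+1)*π*u)
      = Real.sin (π*u) * (2*∑ j ∈ Finset.range n, Real.sin (2*π*(j+1)*u)) := by
  induction n with
  | zero => simp
  | succ n ih =>
    rw [Finset.sum_range_succ]
    push_cast at ih ⊢
    rw [show (2*((n:ℝ)+1)+1)*π*u = 2*π*((n:ℝ)+1)*u + π*u by ring, Real.cos_add]
    rw [show (2*(n:ℝ)+1)*π*u = 2*π*((n:ℝ)+1)*u - π*u by ring, Real.cos_sub] at ih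
    nlinarith [ih]

set_option maxHeartbeats 1000000 in
lemma RLboth (g : ℝ → ℝ) (hm : Measurable g) (C : ℝ)
    (hC : ∀ u ∈ Set.Icc (0:ℝ) 1, |g u| ≤ C) :
    Tendsto (fun n : ℕ => ∫ u in (0:ℝ)..1, g u * Real.sin ((2*(n:ℝ)+1)*π*u)) atTop (𝓝 0) ∧
    Tendsto (fun n : ℕ => ∫ u in (0:ℝ)..1, g u * Real.cos ((2*(n:ℝ)+1)*π*u)) atTop (𝓝 0) := by
  set G : ℝ → ℂ := (Set.Ioc (0:ℝ) 1).indicator (fun u => (g u : ℂ)) with hG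
  have hGint : Integrable G := by
    rw [hG, MeasureTheory.integrable_indicator_iff measurableSet_Ioc]
    apply MeasureTheory.Integrable.mono' (MeasureTheory.integrable_const C)
    · exact ((Complex.measurable_ofReal.comp hm).aestronglyMeasurable).restrict
    · rw [MeasureTheory.ae_restrict_iff' measurableSet_Ioc]
      filter_upwards with u hu
      simpa using hC u ⟨le_of_lt hu.1, hu.2⟩
  -- identification of real/imaginary parts of the Fourier integral
  have key : ∀ w : ℝ,
      (FourierTransform.fourier G w).re = (∫ u in (0:ℝ)..1, g u * Real.cos (2*π*u*w)) ∧
      (FourierTransform.fourier G w).im = -(∫ u in (0:ℝ)..1, g u * Real.sin (2*π*u*w)) := by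
    intro w
    have hInt : Integrable (fun v : ℝ => Complex.exp (↑(-2*π*v*w) * Complex.I) * G v) := by
      apply hGint.bdd_mul (c := 1)
      · exact (Complex.continuous_ofReal.comp (by continuity)).mul
          continuous_const |>.cexp.aestronglyMeasurable
      · refine Filter.Eventually.of_forall fun v => ?_
        rw [Complex.norm_exp_ofReal_mul_I]
    have hF : FourierTransform.fourier G w
        = ∫ v : ℝ, Complex.exp (↑(-2*π*v*w) * Complex.I) * G v := by
      rw [Real.fourier_real_eq_integral_exp_smul]
      simp [smul_eq_mul]
    have hre : ∀ v : ℝ, (Complex.exp (↑(-2*π*v*w) * Complex.I) * G v).re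
        = (Set.Ioc (0:ℝ) 1).indicator (fun v => Real.cos (2*π*v*w) * g v) v := by
      intro v
      by_cases hv : v ∈ Set.Ioc (0:ℝ) 1 <;>
        simp [hG, Set.indicator_of_mem, Set.indicator_of_notMem, hv,
          Complex.exp_ofReal_mul_I_re, Complex.mul_re, Complex.exp_re, Complex.exp_im,
          Real.cos_neg]
    have him : ∀ v : ℝ, (Complex.exp (↑(-2*π*v*w) * Complex.I) * G v).im
        = (Set.Ioc (0:ℝ) 1).indicator (fun v => -(Real.sin (2*π*v*w) * g v)) v := by
      intro v
      by_cases hv : v ∈ Set.Ioc (0:ℝ) 1 <;>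
        simp [hG, Set.indicator_of_mem, Set.indicator_of_notMem, hv,
          Complex.mul_im, Complex.exp_re, Complex.exp_im, Real.sin_neg]
    have hre' := _root_.integral_re hInt
    have him' := _root_.integral_im hInt
    simp only [RCLike.re_to_complex, RCLike.im_to_complex] at hre' him'
    constructor
    · rw [hF, ← hre']
      rw [intervalIntegral.integral_of_le (by norm_num : (0:ℝ) ≤ 1)]
      simp_rw [hre]
      rw [MeasureTheory.integral_indicator measurableSet_Ioc]
      congr 1; ext v; ring
    · rw [hF, ← him']
      rw [intervalIntegral.integral_of_le (by norm_num : (0:ℝ) ≤ 1)]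
      simp_rw [him]
      rw [MeasureTheory.integral_indicator measurableSet_Ioc,
        ← MeasureTheory.integral_neg]
      congr 1; ext v; ring
  have hcc : Tendsto (fun n : ℕ => ((n:ℝ)+1/2)) atTop (Filter.cocompact ℝ) := by
    refine (tendsto_atTop_add_const_right _ _ tendsto_natCast_atTop_atTop).mono_right ?_
    rw [cocompact_eq_atBot_atTop]; exact le_sup_right
  have h0 : Tendsto (fun n : ℕ => FourierTransform.fourier G ((n:ℝ)+1/2)) atTop (𝓝 0) :=
    (Real.zero_at_infty_fourier G).comp hcc
  have hre0 : Tendsto (fun n : ℕ => (FourierTransform.fourier G ((n:ℝ)+1/2)).re) atTop (𝓝 0) := by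
    have := (Complex.continuous_re.tendsto 0).comp h0
    simpa [Function.comp_def] using this
  have him0 : Tendsto (fun n : ℕ => (FourierTransform.fourier G ((n:ℝ)+1/2)).im) atTop (𝓝 0) := by
    have := (Complex.continuous_im.tendsto 0).comp h0
    simpa [Function.comp_def] using this
  have harg : ∀ (n : ℕ) (u : ℝ), 2*π*u*((n:ℝ)+1/2) = (2*(n:ℝ)+1)*π*u := by intros; ring
  constructor
  · have := him0.neg
    rw [neg_zero] at this
    refine this.congr fun n => ?_
    rw [(key ((n:ℝ)+1/2)).2, neg_neg]
    congr 1; ext u; rw [harg n u]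
  · refine hre0.congr fun n => ?_
    rw [(key ((n:ℝ)+1/2)).1]
    congr 1; ext u; rw [harg n u]

lemma boundDivSin (h h' : ℝ → ℝ) (M : ℝ)
    (hd : ∀ u, HasDerivAt h (h' u) u)
    (hM : ∀ u ∈ Set.Icc (0:ℝ) 1, |h' u| ≤ M)
    (h0 : h 0 = 0) (h1 : h 1 = 0) :
    ∀ u ∈ Set.Icc (0:ℝ) 1, |h u / Real.sin (π*u)| ≤ M/2 := by
  have hM0 : 0 ≤ M := le_trans (abs_nonneg _) (hM 0 (by norm_num))
  have mvt : ∀ x ∈ Set.Icc (0:ℝ) 1, ∀ y ∈ Set.Icc (0:ℝ) 1, |h y - h x| ≤ M * |y - x| := by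
    intro x hx y hy
    have := (convex_Icc (0:ℝ) 1).norm_image_sub_le_of_norm_hasDerivWithin_le
      (fun z hz => (hd z).hasDerivWithinAt) (fun z hz => by simpa using hM z hz) hx hy
    simpa [Real.norm_eq_abs] using this
  intro u hu
  obtain ⟨hu0, hu1⟩ := hu
  rcases eq_or_lt_of_le hu0 with h0u | h0u
  · simp [← h0u, h0]; positivity
  rcases eq_or_lt_of_le hu1 with h1u | h1u
  · rw [h1u]
    simp [Real.sin_pi, h1]; positivity
  have hsinpos : 0 < Real.sin (π*u) := by
    apply Real.sin_pos_of_pos_of_lt_pi (by positivity)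
    nlinarith [Real.pi_pos]
  rcases le_or_gt u (1/2) with hhalf | hhalf
  · have hsin : 2*u ≤ Real.sin (π*u) := by
      have := Real.mul_le_sin (x := π*u) (by positivity) (by nlinarith [Real.pi_pos])
      calc 2*u = 2/π*(π*u) := by field_simp
        _ ≤ _ := this
    have hb : |h u| ≤ M * u := by
      have := mvt 0 (by norm_num) u ⟨hu0, hu1⟩
      simpa [h0, abs_of_pos h0u] using this
    rw [abs_div, abs_of_pos hsinpos, div_le_iff₀ hsinpos]
    nlinarith
  · have hsin : 2*(1-u) ≤ Real.sin (π*u) := by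
      have h2 := Real.mul_le_sin (x := π*(1-u)) (by nlinarith [Real.pi_pos]) (by nlinarith [Real.pi_pos])
      have : Real.sin (π*(1-u)) = Real.sin (π*u) := by
        rw [show π*(1-u) = π - π*u by ring, Real.sin_pi_sub]
      rw [this] at h2
      calc 2*(1-u) = 2/π*(π*(1-u)) := by field_simp
        _ ≤ _ := h2
    have hb : |h u| ≤ M * (1-u) := by
      have := mvt 1 (by norm_num) u ⟨hu0, hu1⟩
      rw [h1] at this
      have e : |u - 1| = 1 - u := by rw [abs_of_nonpos (by linarith)]; ring
      simpa [e] using this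
    rw [abs_div, abs_of_pos hsinpos, div_le_iff₀ hsinpos]
    nlinarith

lemma algC (s p b k : ℝ) (hp : p ≠ 0) (h1 : b + k ≠ 0) (h2 : b - k ≠ 0) :
    (s / (2*p*(b+k)) + s / (2*p*(b-k))) * 2⁻¹ = s * (b/(2*p*(b^2-k^2))) := by
  have h3 : b^2 - k^2 ≠ 0 := fun h => (mul_ne_zero h2 h1) (by linear_combination h)
  field_simp
  ring

lemma algS (s p b k : ℝ) (hp : p ≠ 0) (h1 : b + k ≠ 0) (h2 : b - k ≠ 0) :
    (s / (2*p*(b-k)) - s / (2*p*(b+k))) / 2 = s * (k * (2*p*(b^2-k^2))⁻¹) := by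
  have h3 : b^2 - k^2 ≠ 0 := fun h => (mul_ne_zero h2 h1) (by linear_combination h)
  field_simp
  ring

lemma sinPeriodNat (b : ℝ) (m : ℕ) : Real.sin (2*π*b + 2*π*m) = Real.sin (2*π*b) := by
  rw [show 2*π*b + 2*π*(m:ℝ) = 2*π*b + (m:ℝ)*(2*π) by ring, Real.sin_add_nat_mul_two_pi]

lemma sinPeriodNeg (b : ℝ) (m : ℕ) : Real.sin (2*π*b - 2*π*m) = Real.sin (2*π*b) := by
  rw [show 2*π*b - 2*π*(m:ℝ) = 2*π*b + ((-(m:ℤ)):ℤ)*(2*π) by push_cast; ring,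
    Real.sin_add_int_mul_two_pi]

lemma sinNat (m : ℕ) : Real.sin (2*π*m) = 0 := by
  rw [show 2*π*(m:ℝ) = (m:ℝ)*(2*π) by ring]
  rw [show ((m:ℝ)*(2*π)) = ((m:ℤ):ℝ)*(2*π) - 0 by push_cast; ring, Real.sin_int_mul_two_pi_sub]
  simp

lemma cosNat (m : ℕ) : Real.cos (2*π*m) = 1 := by
  rw [show 2*π*(m:ℝ) = (m:ℝ)*(2*π) by ring, Real.cos_nat_mul_two_pi]

lemma termCos0 (j : ℕ) : ∫ u in (0:ℝ)..1, Real.cos (2*π*(j+1)*u) = 0 := by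
  have hc : 2*π*((j:ℝ)+1) ≠ 0 := by positivity
  rw [intCos _ hc, show 2*π*((j:ℝ)+1) = 2*π*((j+1:ℕ):ℝ) by push_cast; ring, sinNat]
  simp

lemma termUC (j : ℕ) : ∫ u in (0:ℝ)..1, u * Real.cos (2*π*(j+1)*u) = 0 := by
  have hc : 2*π*((j:ℝ)+1) ≠ 0 := by positivity
  rw [intUCos _ hc, show 2*π*((j:ℝ)+1) = 2*π*((j+1:ℕ):ℝ) by push_cast; ring, sinNat, cosNat]
  simp

lemma termU (j : ℕ) : ∫ u in (0:ℝ)..1, u * Real.sin (2*π*(j+1)*u) = -(1/(2*π*(j+1))) := by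
  have hc : 2*π*((j:ℝ)+1) ≠ 0 := by positivity
  rw [intUSin _ hc, show 2*π*((j:ℝ)+1) = 2*π*((j+1:ℕ):ℝ) by push_cast; ring, sinNat, cosNat]
  push_cast
  field_simp
  ring

lemma termC (b : ℝ) (j : ℕ) (h1 : b + (j+1) ≠ 0) (h2 : b - (j+1) ≠ 0) :
    ∫ u in (0:ℝ)..1, Real.cos (2*π*b*u) * Real.cos (2*π*(j+1)*u)
      = Real.sin (2*π*b) * (b/(2*π*(b^2-((j:ℝ)+1)^2))) := by
  have hπ := Real.pi_ne_zero
  have hpt : ∀ u : ℝ, Real.cos (2*π*b*u) * Real.cos (2*π*(j+1)*u)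
      = (Real.cos ((2*π*(b+(j+1)))*u) + Real.cos ((2*π*(b-(j+1)))*u))/2 := by
    intro u
    rw [show (2*π*(b+((j:ℝ)+1)))*u = 2*π*b*u + 2*π*((j:ℝ)+1)*u by ring,
      show (2*π*(b-((j:ℝ)+1)))*u = 2*π*b*u - 2*π*((j:ℝ)+1)*u by ring,
      Real.cos_add, Real.cos_sub]
    ring
  rw [intervalIntegral.integral_congr (fun u _ => hpt u)]
  have i1 : IntervalIntegrable (fun u : ℝ => Real.cos ((2*π*(b+((j:ℝ)+1)))*u)) volume 0 1 :=
    (Real.continuous_cos.comp (continuous_const.mul continuous_id)).intervalIntegrable 0 1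
  have i2 : IntervalIntegrable (fun u : ℝ => Real.cos ((2*π*(b-((j:ℝ)+1)))*u)) volume 0 1 :=
    (Real.continuous_cos.comp (continuous_const.mul continuous_id)).intervalIntegrable 0 1
  have hc1 : 2*π*(b+((j:ℝ)+1)) ≠ 0 := mul_ne_zero (by positivity) h1
  have hc2 : 2*π*(b-((j:ℝ)+1)) ≠ 0 := mul_ne_zero (by positivity) h2
  have h3 : b^2 - ((j:ℝ)+1)^2 ≠ 0 := by
    have h4 := mul_ne_zero h2 h1
    intro h; apply h4; linear_combination h
  simp only [div_eq_mul_inv]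
  rw [intervalIntegral.integral_mul_const, intervalIntegral.integral_add i1 i2,
    intCos _ hc1, intCos _ hc2]
  rw [show 2*π*(b+((j:ℝ)+1)) = 2*π*b + 2*π*((j+1:ℕ):ℝ) by push_cast; ring,
    show 2*π*(b-((j:ℝ)+1)) = 2*π*b - 2*π*((j+1:ℕ):ℝ) by push_cast; ring,
    sinPeriodNat, sinPeriodNeg]
  push_cast
  rw [show 2*π*b + 2*π*((j:ℝ)+1) = 2*π*(b+((j:ℝ)+1)) from by ring,
    show 2*π*b - 2*π*((j:ℝ)+1) = 2*π*(b-((j:ℝ)+1)) from by ring, ← div_eq_mul_inv]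
  exact algC _ _ _ _ hπ h1 h2

lemma termS (b : ℝ) (j : ℕ) (h1 : b + (j+1) ≠ 0) (h2 : b - (j+1) ≠ 0) :
    ∫ u in (0:ℝ)..1, Real.sin (2*π*b*u) * Real.sin (2*π*(j+1)*u)
      = Real.sin (2*π*b) * (((j:ℝ)+1)/(2*π*(b^2-((j:ℝ)+1)^2))) := by
  have hπ := Real.pi_ne_zero
  have hpt : ∀ u : ℝ, Real.sin (2*π*b*u) * Real.sin (2*π*(j+1)*u)
      = (Real.cos ((2*π*(b-(j+1)))*u) - Real.cos ((2*π*(b+(j+1)))*u))/2 := by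
    intro u
    rw [show (2*π*(b+((j:ℝ)+1)))*u = 2*π*b*u + 2*π*((j:ℝ)+1)*u by ring,
      show (2*π*(b-((j:ℝ)+1)))*u = 2*π*b*u - 2*π*((j:ℝ)+1)*u by ring,
      Real.cos_add, Real.cos_sub]
    ring
  rw [intervalIntegral.integral_congr (fun u _ => hpt u)]
  have i1 : IntervalIntegrable (fun u : ℝ => Real.cos ((2*π*(b-((j:ℝ)+1)))*u)) volume 0 1 :=
    (Real.continuous_cos.comp (continuous_const.mul continuous_id)).intervalIntegrable 0 1
  have i2 : IntervalIntegrable (fun u : ℝ => Real.cos ((2*π*(b+((j:ℝ)+1)))*u)) volume 0 1 :=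
    (Real.continuous_cos.comp (continuous_const.mul continuous_id)).intervalIntegrable 0 1
  have hc1 : 2*π*(b+((j:ℝ)+1)) ≠ 0 := mul_ne_zero (by positivity) h1
  have hc2 : 2*π*(b-((j:ℝ)+1)) ≠ 0 := mul_ne_zero (by positivity) h2
  have h3 : b^2 - ((j:ℝ)+1)^2 ≠ 0 := by
    have h4 := mul_ne_zero h2 h1
    intro h; apply h4; linear_combination h
  simp only [div_eq_mul_inv]
  rw [intervalIntegral.integral_mul_const, intervalIntegral.integral_sub i1 i2,
    intCos _ hc2, intCos _ hc1]
  rw [show 2*π*(b+((j:ℝ)+1)) = 2*π*b + 2*π*((j+1:ℕ):ℝ) by push_cast; ring,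
    show 2*π*(b-((j:ℝ)+1)) = 2*π*b - 2*π*((j+1:ℕ):ℝ) by push_cast; ring,
    sinPeriodNat, sinPeriodNeg]
  push_cast
  rw [show 2*π*b + 2*π*((j:ℝ)+1) = 2*π*(b+((j:ℝ)+1)) from by ring,
    show 2*π*b - 2*π*((j:ℝ)+1) = 2*π*(b-((j:ℝ)+1)) from by ring]
  exact algS _ _ _ _ hπ h1 h2

lemma boundedII (f : ℝ → ℝ) (hm : Measurable f) (C : ℝ)
    (hC : ∀ u ∈ Set.Icc (0:ℝ) 1, |f u| ≤ C) : IntervalIntegrable f volume 0 1 := by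
  rw [intervalIntegrable_iff, Set.uIoc_of_le (by norm_num : (0:ℝ) ≤ 1)]
  apply MeasureTheory.Integrable.mono' (MeasureTheory.integrable_const C)
    (hm.aestronglyMeasurable.restrict)
  rw [MeasureTheory.ae_restrict_iff' measurableSet_Ioc]
  filter_upwards with u hu
  simpa using hC u ⟨le_of_lt hu.1, hu.2⟩

lemma iiCongrIoo (F G : ℝ → ℝ) (h : ∀ u, 0 < u → u < 1 → F u = G u) :
    ∫ u in (0:ℝ)..1, F u = ∫ u in (0:ℝ)..1, G u := by
  rw [intervalIntegral.integral_of_le (by norm_num : (0:ℝ) ≤ 1),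
    intervalIntegral.integral_of_le (by norm_num : (0:ℝ) ≤ 1),
    MeasureTheory.integral_Ioc_eq_integral_Ioo, MeasureTheory.integral_Ioc_eq_integral_Ioo]
  exact MeasureTheory.setIntegral_congr_fun measurableSet_Ioo (fun u hu => h u hu.1 hu.2)

/-- The harmonic number `H(n) = ∑_{j=1}^n 1/j`. -/
noncomputable def harmonicR (n : ℕ) : ℝ := ∑ j ∈ Finset.range n, (1 : ℝ) / (j + 1)

set_option maxHeartbeats 2000000 in
theorem hp_sub_harmonic_limit_closed_form (b : ℝ)
    (hb : ∀ z : ℤ, b ≠ (z : ℝ)) (hb2 : ∀ z : ℤ, 2 * b ≠ (z : ℝ)) :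
    Filter.Tendsto
      (fun n : ℕ => (∑ j ∈ Finset.range n, 1 / ((j : ℝ) + 1 + b)) - harmonicR n)
      Filter.atTop
      (nhds (-1 / (2 * b) + (π / 2) * Real.cot (π * b) -
        π * ∫ u in (0:ℝ)..1,
          (Real.sin (2 * π * b * u) / Real.sin (2 * π * b) - u) * Real.cot (π * u))) := by
  have hπ : (π:ℝ) ≠ 0 := Real.pi_ne_zero
  have hπpos := Real.pi_pos
  have hb0 : b ≠ 0 := by simpa using hb 0
  have hsπ : Real.sin (π*b) ≠ 0 := by
    rw [Real.sin_ne_zero_iff]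
    intro n hn
    exact hb n (mul_left_cancel₀ hπ (by linear_combination -hn))
  have hs2 : Real.sin (2*π*b) ≠ 0 := by
    rw [Real.sin_ne_zero_iff]
    intro n hn
    exact hb2 n (mul_left_cancel₀ hπ (by linear_combination -hn))
  have hcπ : Real.cos (π*b) ≠ 0 := by
    intro h
    apply hs2
    rw [show 2*π*b = 2*(π*b) by ring, Real.sin_two_mul, h, mul_zero]
  have hk1 : ∀ j:ℕ, b + ((j:ℝ)+1) ≠ 0 := by
    intro j h
    exact hb (-(j+1) : ℤ) (by push_cast; linarith)
  have hk2 : ∀ j:ℕ, b - ((j:ℝ)+1) ≠ 0 := by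
    intro j h
    exact hb ((j+1) : ℤ) (by push_cast; linarith)
  have h3 : ∀ j:ℕ, b^2 - ((j:ℝ)+1)^2 ≠ 0 := fun j h =>
    (mul_ne_zero (hk2 j) (hk1 j)) (by linear_combination h)
  have hj0 : ∀ j:ℕ, ((j:ℝ)+1) ≠ 0 := fun j => by positivity
  -- Step 1 : rewrite the sequence
  have hseq : ∀ n : ℕ, (∑ j ∈ Finset.range n, 1/((j:ℝ)+1+b)) - harmonicR n
      = (∑ j ∈ Finset.range n, b/(b^2-((j:ℝ)+1)^2))
        - ∑ j ∈ Finset.range n, b^2/(((j:ℝ)+1)*(b^2-((j:ℝ)+1)^2)) := by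
    intro n
    rw [harmonicR, ← Finset.sum_sub_distrib, ← Finset.sum_sub_distrib]
    refine Finset.sum_congr rfl fun j _ => ?_
    have e4 : (j:ℝ)+1+b ≠ 0 := fun h => (hk1 j) (by linarith)
    rw [div_sub_div _ _ e4 (hj0 j), div_sub_div _ _ (h3 j) (mul_ne_zero (hj0 j) (h3 j)),
      div_eq_div_iff (mul_ne_zero e4 (hj0 j))
        (mul_ne_zero (h3 j) (mul_ne_zero (hj0 j) (h3 j)))]
    ring
  -- continuity helpers
  have contCos : ∀ c:ℝ, Continuous fun u:ℝ => Real.cos (c*u) :=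
    fun c => Real.continuous_cos.comp (continuous_const.mul continuous_id)
  have contSin : ∀ c:ℝ, Continuous fun u:ℝ => Real.sin (c*u) :=
    fun c => Real.continuous_sin.comp (continuous_const.mul continuous_id)
  ---------------------------------------------------------------- A side
  have hdφ : ∀ u : ℝ, HasDerivAt (fun v : ℝ => Real.cos (2*π*b*v) - (1-v) - v*Real.cos (2*π*b))
      (-(Real.sin (2*π*b*u)*(2*π*b)) + 1 - Real.cos (2*π*b)) u := by
    intro u
    have h1 : HasDerivAt (fun v : ℝ => 2*π*b*v) (2*π*b) u := by
      simpa using (hasDerivAt_id u).const_mul (2*π*b)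
    have h2 := h1.cos
    have h3' : HasDerivAt (fun v : ℝ => (1:ℝ)-v) (-1) u := by
      simpa using (hasDerivAt_id u).const_sub 1
    have h4 : HasDerivAt (fun v : ℝ => v*Real.cos (2*π*b)) (Real.cos (2*π*b)) u := by
      simpa using (hasDerivAt_id u).mul_const (Real.cos (2*π*b))
    have := (h2.sub h3').sub h4
    rw [show -(Real.sin (2*π*b*u)*(2*π*b)) + 1 - Real.cos (2*π*b)
      = -Real.sin (2*π*b*u) * (2*π*b) - -1 - Real.cos (2*π*b) by ring]
    exact this
  have hMφ : ∀ u ∈ Set.Icc (0:ℝ) 1,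
      |(-(Real.sin (2*π*b*u)*(2*π*b)) + 1 - Real.cos (2*π*b))| ≤ 2*π*|b|+2 := by
    intro u _
    have h2 : |2*π*b| = 2*π*|b| := by
      rw [show 2*π*b = (2*π)*b by ring, abs_mul, abs_of_pos (by positivity : (0:ℝ) < 2*π)]
    have h1 : |Real.sin (2*π*b*u) * (2*π*b)| ≤ 2*π*|b| := by
      rw [abs_mul, h2]
      have hs := abs_sin_le_one (2*π*b*u)
      have := mul_le_mul_of_nonneg_right hs (by positivity : (0:ℝ) ≤ 2*π*|b|)
      linarith
    have h3' : |1 - Real.cos (2*π*b)| ≤ 2 :=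
      abs_le.2 ⟨by nlinarith [Real.cos_le_one (2*π*b)], by nlinarith [Real.neg_one_le_cos (2*π*b)]⟩
    calc |(-(Real.sin (2*π*b*u)*(2*π*b)) + 1 - Real.cos (2*π*b))|
        = |(-(Real.sin (2*π*b*u)*(2*π*b))) + (1 - Real.cos (2*π*b))| := by ring_nf
      _ ≤ |(-(Real.sin (2*π*b*u)*(2*π*b)))| + |1 - Real.cos (2*π*b)| := abs_add_le _ _
      _ ≤ 2*π*|b| + 2 := by rw [abs_neg]; linarith
  have hψb : ∀ u ∈ Set.Icc (0:ℝ) 1,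
      |(Real.cos (2*π*b*u) - (1-u) - u*Real.cos (2*π*b)) / Real.sin (π*u)| ≤ (2*π*|b|+2)/2 := by
    apply boundDivSin _ _ _ hdφ hMφ
    · simp
    · simp
  have hψm : Measurable fun u : ℝ =>
      (Real.cos (2*π*b*u) - (1-u) - u*Real.cos (2*π*b)) / Real.sin (π*u) := by
    apply Measurable.div
    · exact (((contCos (2*π*b)).sub (continuous_const.sub continuous_id)).sub
        (continuous_id.mul continuous_const)).measurable
    · exact (contSin π).measurable
  have hRsin := (RLboth _ hψm _ hψb).1
  -- key identity for A
  have keyA : ∀ n : ℕ,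
      Real.sin (2*π*b)/(2*π*b)
        + ∑ j ∈ Finset.range n, 2*(Real.sin (2*π*b) * (b/(2*π*(b^2-((j:ℝ)+1)^2))))
      = (∫ u in (0:ℝ)..1, ((Real.cos (2*π*b*u) - (1-u) - u*Real.cos (2*π*b)) / Real.sin (π*u))
            * Real.sin ((2*(n:ℝ)+1)*π*u))
        + (1/2 + Real.cos (2*π*b)/2) := by
    intro n
    have hsumcont : Continuous fun u : ℝ =>
        ∑ j ∈ Finset.range n, 2*(Real.cos (2*π*b*u) * Real.cos (2*π*((j:ℝ)+1)*u)) := by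
      apply continuous_finset_sum
      intro j _
      exact continuous_const.mul ((contCos (2*π*b)).mul (contCos (2*π*((j:ℝ)+1))))
    have hI1 : ∫ u in (0:ℝ)..1, (Real.cos (2*π*b*u)
          * (1 + 2*∑ j ∈ Finset.range n, Real.cos (2*π*(j+1)*u)))
        = Real.sin (2*π*b)/(2*π*b)
          + ∑ j ∈ Finset.range n, 2*(Real.sin (2*π*b) * (b/(2*π*(b^2-((j:ℝ)+1)^2)))) := by
      have hpt : ∀ u : ℝ, Real.cos (2*π*b*u) * (1 + 2*∑ j ∈ Finset.range n, Real.cos (2*π*(j+1)*u))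
          = Real.cos (2*π*b*u)
            + ∑ j ∈ Finset.range n, 2*(Real.cos (2*π*b*u) * Real.cos (2*π*((j:ℝ)+1)*u)) := by
        intro u
        have e : (2:ℝ)*∑ j ∈ Finset.range n, Real.cos (2*π*((j:ℝ)+1)*u)
            = ∑ j ∈ Finset.range n, 2*Real.cos (2*π*((j:ℝ)+1)*u) := by rw [Finset.mul_sum]
        rw [mul_add, mul_one, e, Finset.mul_sum]
        congr 1
        exact Finset.sum_congr rfl fun j _ => by ring
      rw [intervalIntegral.integral_congr (fun u _ => hpt u),
        intervalIntegral.integral_add ((contCos (2*π*b)).intervalIntegrable 0 1)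
          (hsumcont.intervalIntegrable 0 1),
        intervalIntegral.integral_finset_sum
          (f := fun (j:ℕ) (u:ℝ) => 2*(Real.cos (2*π*b*u) * Real.cos (2*π*((j:ℝ)+1)*u)))
          (fun j _ =>
          (continuous_const.mul ((contCos (2*π*b)).mul
            (contCos (2*π*((j:ℝ)+1))))).intervalIntegrable 0 1)]
      congr 1
      · have := intCos (2*π*b) (by simp [hπ, hb0])
        simpa using this
      · refine Finset.sum_congr rfl fun j _ => ?_
        rw [intervalIntegral.integral_const_mul, termC b j (hk1 j) (hk2 j)]
    have hrest_cont : Continuous fun u : ℝ => ((1-u) + u*Real.cos (2*π*b))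
        * (1 + 2*∑ j ∈ Finset.range n, Real.cos (2*π*((j:ℝ)+1)*u)) := by
      apply Continuous.mul
      · exact (continuous_const.sub continuous_id).add (continuous_id.mul continuous_const)
      · exact continuous_const.add (continuous_const.mul
          (continuous_finset_sum _ fun j _ => contCos (2*π*((j:ℝ)+1))))
    have hII : IntervalIntegrable (fun u : ℝ =>
        ((Real.cos (2*π*b*u) - (1-u) - u*Real.cos (2*π*b)) / Real.sin (π*u))
          * Real.sin ((2*(n:ℝ)+1)*π*u)) volume 0 1 := by
      apply boundedII _ (hψm.mul (contSin ((2*(n:ℝ)+1)*π)).measurable) ((2*π*|b|+2)/2)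
      intro u hu
      rw [Pi.mul_apply, abs_mul]
      calc _ ≤ ((2*π*|b|+2)/2) * 1 := by
            apply mul_le_mul (hψb u hu) (abs_sin_le_one _) (abs_nonneg _) (by positivity)
        _ = (2*π*|b|+2)/2 := by ring
    have hI2 : ∫ u in (0:ℝ)..1, (Real.cos (2*π*b*u)
          * (1 + 2*∑ j ∈ Finset.range n, Real.cos (2*π*(j+1)*u)))
        = (∫ u in (0:ℝ)..1, ((Real.cos (2*π*b*u) - (1-u) - u*Real.cos (2*π*b)) / Real.sin (π*u))
            * Real.sin ((2*(n:ℝ)+1)*π*u))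
          + (1/2 + Real.cos (2*π*b)/2) := by
      have hcong : ∫ u in (0:ℝ)..1, (Real.cos (2*π*b*u)
            * (1 + 2*∑ j ∈ Finset.range n, Real.cos (2*π*(j+1)*u)))
          = ∫ u in (0:ℝ)..1, (((Real.cos (2*π*b*u) - (1-u) - u*Real.cos (2*π*b)) / Real.sin (π*u))
              * Real.sin ((2*(n:ℝ)+1)*π*u)
            + ((1-u) + u*Real.cos (2*π*b))
              * (1 + 2*∑ j ∈ Finset.range n, Real.cos (2*π*((j:ℝ)+1)*u))) := by
        apply iiCongrIoo
        intro u hu0 hu1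
        have hsin : Real.sin (π*u) ≠ 0 := by
          apply ne_of_gt
          apply Real.sin_pos_of_pos_of_lt_pi (by positivity)
          nlinarith
        rw [← dirichlet n u]
        field_simp
        ring
      rw [hcong, intervalIntegral.integral_add hII (hrest_cont.intervalIntegrable 0 1)]
      congr 1
      -- ∫ rest = 1/2 + cos(2πb)/2
      have hpt2 : ∀ u : ℝ, ((1-u) + u*Real.cos (2*π*b))
            * (1 + 2*∑ j ∈ Finset.range n, Real.cos (2*π*((j:ℝ)+1)*u))
          = (1 + (Real.cos (2*π*b) - 1)*u)
            + ∑ j ∈ Finset.range n,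
              (2*Real.cos (2*π*((j:ℝ)+1)*u)
                + (2*(Real.cos (2*π*b) - 1))*(u*Real.cos (2*π*((j:ℝ)+1)*u))) := by
        intro u
        have e : (2:ℝ)*∑ j ∈ Finset.range n, Real.cos (2*π*((j:ℝ)+1)*u)
            = ∑ j ∈ Finset.range n, 2*Real.cos (2*π*((j:ℝ)+1)*u) := by rw [Finset.mul_sum]
        rw [mul_add, mul_one, e, Finset.mul_sum]
        congr 1
        · ring
        · exact Finset.sum_congr rfl fun j _ => by ring
      rw [intervalIntegral.integral_congr (fun u _ => hpt2 u)]
      have c1 : Continuous fun u:ℝ => 1 + (Real.cos (2*π*b) - 1)*u :=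
        continuous_const.add (continuous_const.mul continuous_id)
      have c2 : Continuous fun u:ℝ => ∑ j ∈ Finset.range n,
          (2*Real.cos (2*π*((j:ℝ)+1)*u)
            + (2*(Real.cos (2*π*b) - 1))*(u*Real.cos (2*π*((j:ℝ)+1)*u))) := by
        apply continuous_finset_sum
        intro j _
        exact (continuous_const.mul (contCos _)).add
          (continuous_const.mul (continuous_id.mul (contCos _)))
      rw [intervalIntegral.integral_add (c1.intervalIntegrable 0 1) (c2.intervalIntegrable 0 1),
        intervalIntegral.integral_finset_sum
          (f := fun (j:ℕ) (u:ℝ) => 2*Real.cos (2*π*((j:ℝ)+1)*u)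
            + (2*(Real.cos (2*π*b) - 1))*(u*Real.cos (2*π*((j:ℝ)+1)*u)))
          (fun j _ =>
          ((continuous_const.mul (contCos (2*π*((j:ℝ)+1)))).add
            (continuous_const.mul (continuous_id.mul
              (contCos (2*π*((j:ℝ)+1)))))).intervalIntegrable 0 1)]
      have hz : ∀ j ∈ Finset.range n, (∫ u in (0:ℝ)..1,
          (2*Real.cos (2*π*((j:ℝ)+1)*u)
            + (2*(Real.cos (2*π*b) - 1))*(u*Real.cos (2*π*((j:ℝ)+1)*u)))) = 0 := by
        intro j _
        have i1 : IntervalIntegrable (fun u:ℝ => 2*Real.cos (2*π*((j:ℝ)+1)*u)) volume 0 1 := by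
          apply Continuous.intervalIntegrable; fun_prop
        have i2 : IntervalIntegrable
            (fun u:ℝ => (2*(Real.cos (2*π*b) - 1))*(u*Real.cos (2*π*((j:ℝ)+1)*u))) volume 0 1 := by
          apply Continuous.intervalIntegrable; fun_prop
        rw [intervalIntegral.integral_add i1 i2,
          intervalIntegral.integral_const_mul, intervalIntegral.integral_const_mul,
          termCos0 j, termUC j]
        ring
      rw [Finset.sum_congr rfl hz, Finset.sum_const_zero]
      have : ∫ u in (0:ℝ)..1, (1 + (Real.cos (2*π*b) - 1)*u)
          = 1 + (Real.cos (2*π*b) - 1)*(1/2) := by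
        have i1 : IntervalIntegrable (fun _:ℝ => (1:ℝ)) volume 0 1 := by
          apply Continuous.intervalIntegrable; fun_prop
        have i2 : IntervalIntegrable (fun u:ℝ => (Real.cos (2*π*b) - 1)*u) volume 0 1 := by
          apply Continuous.intervalIntegrable; fun_prop
        rw [intervalIntegral.integral_add i1 i2,
          intervalIntegral.integral_const_mul, integral_id]
        norm_num
      rw [this]
      ring
    rw [← hI1, hI2]
  ---------------------------------------------------------------- B side
  have hdg : ∀ u : ℝ, HasDerivAt (fun v : ℝ => Real.sin (2*π*b*v)/Real.sin (2*π*b) - v)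
      (Real.cos (2*π*b*u)*(2*π*b)/Real.sin (2*π*b) - 1) u := by
    intro u
    have h1 : HasDerivAt (fun v : ℝ => 2*π*b*v) (2*π*b) u := by
      simpa using (hasDerivAt_id u).const_mul (2*π*b)
    exact (h1.sin.div_const _).sub (hasDerivAt_id u)
  have hMg : ∀ u ∈ Set.Icc (0:ℝ) 1,
      |Real.cos (2*π*b*u)*(2*π*b)/Real.sin (2*π*b) - 1| ≤ 2*π*|b|/|Real.sin (2*π*b)| + 1 := by
    intro u _
    have h2 : |2*π*b| = 2*π*|b| := by
      rw [show 2*π*b = (2*π)*b by ring, abs_mul, abs_of_pos (by positivity : (0:ℝ) < 2*π)]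
    have h1 : |Real.cos (2*π*b*u)*(2*π*b)/Real.sin (2*π*b)| ≤ 2*π*|b|/|Real.sin (2*π*b)| := by
      rw [abs_div, abs_mul, h2]
      rw [div_le_div_iff_of_pos_right (abs_pos.2 hs2)]
      have hc := abs_cos_le_one (2*π*b*u)
      have := mul_le_mul_of_nonneg_right hc (by positivity : (0:ℝ) ≤ 2*π*|b|)
      linarith
    calc |Real.cos (2*π*b*u)*(2*π*b)/Real.sin (2*π*b) - 1|
        ≤ |Real.cos (2*π*b*u)*(2*π*b)/Real.sin (2*π*b)| + |(1:ℝ)| := abs_sub _ _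
      _ ≤ 2*π*|b|/|Real.sin (2*π*b)| + 1 := by rw [abs_one]; linarith
  have hgb : ∀ u ∈ Set.Icc (0:ℝ) 1,
      |(Real.sin (2*π*b*u)/Real.sin (2*π*b) - u) / Real.sin (π*u)|
        ≤ (2*π*|b|/|Real.sin (2*π*b)| + 1)/2 := by
    apply boundDivSin _ _ _ hdg hMg
    · simp
    · rw [mul_one]
      field_simp
      ring
  have hgm : Measurable fun u : ℝ =>
      (Real.sin (2*π*b*u)/Real.sin (2*π*b) - u) / Real.sin (π*u) := by
    apply Measurable.div
    · exact (((contSin (2*π*b)).div_const _).sub continuous_id).measurable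
    · exact (contSin π).measurable
  have hScos := (RLboth _ hgm _ hgb).2
  have hgII : ∀ c : ℝ, IntervalIntegrable (fun u : ℝ =>
      ((Real.sin (2*π*b*u)/Real.sin (2*π*b) - u) / Real.sin (π*u)) * Real.cos (c*u))
      volume 0 1 := by
    intro c
    apply boundedII _ (hgm.mul (contCos c).measurable) ((2*π*|b|/|Real.sin (2*π*b)| + 1)/2)
    intro u hu
    rw [Pi.mul_apply, abs_mul]
    calc _ ≤ ((2*π*|b|/|Real.sin (2*π*b)| + 1)/2) * 1 := by
          apply mul_le_mul (hgb u hu) (abs_cos_le_one _) (abs_nonneg _) ?_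
          have : (0:ℝ) ≤ 2*π*|b|/|Real.sin (2*π*b)| := by positivity
          linarith
      _ = _ := by ring
  have keyB : ∀ n : ℕ,
      (∫ u in (0:ℝ)..1, ((Real.sin (2*π*b*u)/Real.sin (2*π*b) - u) / Real.sin (π*u))
          * Real.cos (π*u))
        - (∫ u in (0:ℝ)..1, ((Real.sin (2*π*b*u)/Real.sin (2*π*b) - u) / Real.sin (π*u))
          * Real.cos ((2*(n:ℝ)+1)*π*u))
      = ∑ j ∈ Finset.range n,
          (1/π)*(b^2/(((j:ℝ)+1)*(b^2-((j:ℝ)+1)^2))) := by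
    intro n
    have h1 : IntervalIntegrable (fun u : ℝ =>
        ((Real.sin (2*π*b*u)/Real.sin (2*π*b) - u) / Real.sin (π*u)) * Real.cos (π*u))
        volume 0 1 := by
      have := hgII π
      simpa using this
    have h2 : IntervalIntegrable (fun u : ℝ =>
        ((Real.sin (2*π*b*u)/Real.sin (2*π*b) - u) / Real.sin (π*u))
          * Real.cos ((2*(n:ℝ)+1)*π*u)) volume 0 1 := by
      have := hgII ((2*(n:ℝ)+1)*π)
      simpa [mul_assoc] using this
    rw [← intervalIntegral.integral_sub h1 h2]
    have e1 : ∫ u in (0:ℝ)..1,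
        (((Real.sin (2*π*b*u)/Real.sin (2*π*b) - u) / Real.sin (π*u)) * Real.cos (π*u)
          - ((Real.sin (2*π*b*u)/Real.sin (2*π*b) - u) / Real.sin (π*u))
            * Real.cos ((2*(n:ℝ)+1)*π*u))
        = ∫ u in (0:ℝ)..1, ((Real.sin (2*π*b*u)/Real.sin (2*π*b) - u)
            * (2*∑ j ∈ Finset.range n, Real.sin (2*π*(j+1)*u))) := by
      apply iiCongrIoo
      intro u hu0 hu1
      have hsin : Real.sin (π*u) ≠ 0 := by
        apply ne_of_gt
        apply Real.sin_pos_of_pos_of_lt_pi (by positivity)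
        nlinarith
      rw [← mul_sub, conjDirichlet n u]
      field_simp
    rw [e1]
    have e2 : ∀ u : ℝ, (Real.sin (2*π*b*u)/Real.sin (2*π*b) - u)
          * (2*∑ j ∈ Finset.range n, Real.sin (2*π*(j+1)*u))
        = ∑ j ∈ Finset.range n,
            2*((Real.sin (2*π*b*u)/Real.sin (2*π*b) - u) * Real.sin (2*π*((j:ℝ)+1)*u)) := by
      intro u
      have e : (2:ℝ)*∑ j ∈ Finset.range n, Real.sin (2*π*((j:ℝ)+1)*u)
          = ∑ j ∈ Finset.range n, 2*Real.sin (2*π*((j:ℝ)+1)*u) := by rw [Finset.mul_sum]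
      rw [e, Finset.mul_sum]
      exact Finset.sum_congr rfl fun j _ => by ring
    rw [intervalIntegral.integral_congr (fun u _ => e2 u),
      intervalIntegral.integral_finset_sum
        (f := fun (j:ℕ) (u:ℝ) =>
          2*((Real.sin (2*π*b*u)/Real.sin (2*π*b) - u) * Real.sin (2*π*((j:ℝ)+1)*u)))
        (fun j _ => by apply Continuous.intervalIntegrable; fun_prop)]
    refine Finset.sum_congr rfl fun j _ => ?_
    rw [intervalIntegral.integral_const_mul]
    have ept : ∀ u : ℝ, (Real.sin (2*π*b*u)/Real.sin (2*π*b) - u) * Real.sin (2*π*((j:ℝ)+1)*u)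
        = (1/Real.sin (2*π*b))*(Real.sin (2*π*b*u) * Real.sin (2*π*((j:ℝ)+1)*u))
          - u * Real.sin (2*π*((j:ℝ)+1)*u) := fun u => by ring
    have i1 : IntervalIntegrable (fun u:ℝ =>
        (1/Real.sin (2*π*b))*(Real.sin (2*π*b*u) * Real.sin (2*π*((j:ℝ)+1)*u))) volume 0 1 := by
      apply Continuous.intervalIntegrable; fun_prop
    have i2 : IntervalIntegrable (fun u:ℝ => u * Real.sin (2*π*((j:ℝ)+1)*u)) volume 0 1 := by
      apply Continuous.intervalIntegrable; fun_prop
    rw [intervalIntegral.integral_congr (fun u _ => ept u),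
      intervalIntegral.integral_sub i1 i2, intervalIntegral.integral_const_mul,
      termS b j (hk1 j) (hk2 j), termU j]
    have d1 := hj0 j
    have d2 := h3 j
    field_simp
    ring
  ---------------------------------------------------------------- limits
  have hAeq : ∀ n : ℕ, (∑ j ∈ Finset.range n, b/(b^2-((j:ℝ)+1)^2))
      = (π/Real.sin (2*π*b)) * ((∫ u in (0:ℝ)..1,
          ((Real.cos (2*π*b*u) - (1-u) - u*Real.cos (2*π*b)) / Real.sin (π*u))
            * Real.sin ((2*(n:ℝ)+1)*π*u))
        + ((1/2 + Real.cos (2*π*b)/2) - Real.sin (2*π*b)/(2*π*b))) := by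
    intro n
    have k := keyA n
    have e : ∑ j ∈ Finset.range n, 2*(Real.sin (2*π*b) * (b/(2*π*(b^2-((j:ℝ)+1)^2))))
        = (Real.sin (2*π*b)/π) * ∑ j ∈ Finset.range n, b/(b^2-((j:ℝ)+1)^2) := by
      rw [Finset.mul_sum]
      refine Finset.sum_congr rfl fun j _ => ?_
      have d := h3 j
      field_simp
    rw [e] at k
    have h5 : (Real.sin (2*π*b)/π) * (∑ j ∈ Finset.range n, b/(b^2-((j:ℝ)+1)^2))
        = (∫ u in (0:ℝ)..1,
            ((Real.cos (2*π*b*u) - (1-u) - u*Real.cos (2*π*b)) / Real.sin (π*u))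
              * Real.sin ((2*(n:ℝ)+1)*π*u))
          + ((1/2 + Real.cos (2*π*b)/2) - Real.sin (2*π*b)/(2*π*b)) := by linarith
    calc (∑ j ∈ Finset.range n, b/(b^2-((j:ℝ)+1)^2))
        = (π/Real.sin (2*π*b))
          * ((Real.sin (2*π*b)/π) * ∑ j ∈ Finset.range n, b/(b^2-((j:ℝ)+1)^2)) := by
          rw [← mul_assoc, div_mul_div_comm, mul_comm π, div_self (mul_ne_zero hs2 hπ), one_mul]
      _ = _ := by rw [h5]
  have hAlim : Tendsto (fun n : ℕ => ∑ j ∈ Finset.range n, b/(b^2-((j:ℝ)+1)^2)) atTop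
      (𝓝 ((π/Real.sin (2*π*b))
        * (0 + ((1/2 + Real.cos (2*π*b)/2) - Real.sin (2*π*b)/(2*π*b))))) := by
    have h := (hRsin.add (tendsto_const_nhds
      (x := (1/2 + Real.cos (2*π*b)/2) - Real.sin (2*π*b)/(2*π*b)))).const_mul
      (π/Real.sin (2*π*b))
    exact h.congr fun n => (hAeq n).symm
  have hBeq : ∀ n : ℕ, (∑ j ∈ Finset.range n, b^2/(((j:ℝ)+1)*(b^2-((j:ℝ)+1)^2)))
      = π * ((∫ u in (0:ℝ)..1, ((Real.sin (2*π*b*u)/Real.sin (2*π*b) - u) / Real.sin (π*u))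
            * Real.cos (π*u))
          - (∫ u in (0:ℝ)..1, ((Real.sin (2*π*b*u)/Real.sin (2*π*b) - u) / Real.sin (π*u))
            * Real.cos ((2*(n:ℝ)+1)*π*u))) := by
    intro n
    have k := keyB n
    rw [← Finset.mul_sum] at k
    rw [k]
    field_simp
  have hBlim : Tendsto (fun n : ℕ =>
      ∑ j ∈ Finset.range n, b^2/(((j:ℝ)+1)*(b^2-((j:ℝ)+1)^2))) atTop
      (𝓝 (π * ((∫ u in (0:ℝ)..1, ((Real.sin (2*π*b*u)/Real.sin (2*π*b) - u) / Real.sin (π*u))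
            * Real.cos (π*u)) - 0))) := by
    have h := (Tendsto.sub (tendsto_const_nhds
      (x := ∫ u in (0:ℝ)..1, ((Real.sin (2*π*b*u)/Real.sin (2*π*b) - u) / Real.sin (π*u))
        * Real.cos (π*u))) hScos).const_mul π
    exact h.congr fun n => (hBeq n).symm
  have hfinal := hAlim.sub hBlim
  have hIeq : (∫ u in (0:ℝ)..1,
        (Real.sin (2 * π * b * u) / Real.sin (2 * π * b) - u) * Real.cot (π * u))
      = ∫ u in (0:ℝ)..1, ((Real.sin (2*π*b*u)/Real.sin (2*π*b) - u) / Real.sin (π*u))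
          * Real.cos (π*u) := by
    apply intervalIntegral.integral_congr
    intro u _
    simp only [Real.cot_eq_cos_div_sin]
    ring
  have hpoint : -1 / (2 * b) + (π / 2) * Real.cot (π * b) -
        π * ∫ u in (0:ℝ)..1,
          (Real.sin (2 * π * b * u) / Real.sin (2 * π * b) - u) * Real.cot (π * u)
      = ((π/Real.sin (2*π*b))
          * (0 + ((1/2 + Real.cos (2*π*b)/2) - Real.sin (2*π*b)/(2*π*b))))
        - (π * ((∫ u in (0:ℝ)..1, ((Real.sin (2*π*b*u)/Real.sin (2*π*b) - u) / Real.sin (π*u))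
            * Real.cos (π*u)) - 0)) := by
    rw [hIeq, Real.cot_eq_cos_div_sin, show 2*π*b = 2*(π*b) by ring, Real.sin_two_mul,
      Real.cos_two_mul]
    have hsπ' : Real.sin (b*π) ≠ 0 := by rwa [mul_comm]
    have hcπ' : Real.cos (b*π) ≠ 0 := by rwa [mul_comm]
    field_simp
    ring
  rw [hpoint]
  exact hfinal.congr fun n => (hseq n).symm
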